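/- Let U ⊆ B(H₁,H₂) be a subspace and φ = Map(U) as above. Then Ref(U) = { T ∈ B(H₁,H₂) : φ(P)⊥ T P = 0 for every projection P on H₁ }. -/

import Mathlib

open ContinuousLinearMap

/-- An orthogonal projection: a self-adjoint idempotent. -/
def IsProjection {K : Type*} [NormedAddCommGroup K] [InnerProductSpace ℂ K] [CompleteSpace K]
    (P : K →L[ℂ] K) : Prop :=
  IsSelfAdjoint P ∧ P ∘L P = P

/-- The closed subspace generated by `{ T (P y) : T ∈ U, y ∈ H₁ }`. -/
def mapSubmodule {H₁ H₂ : Type*} [NormedAddCommGroup H₁] [InnerProductSpace ℂ H₁]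
    [NormedAddCommGroup H₂] [InnerProductSpace ℂ H₂]
    (U : Set (H₁ →L[ℂ] H₂)) (P : H₁ →L[ℂ] H₁) : Submodule ℂ H₂ :=
  (Submodule.span ℂ {z : H₂ | ∃ T ∈ U, ∃ y : H₁, z = T (P y)}).topologicalClosure

/-- `φ(P) = Map(U)(P)`: the orthogonal projection of `H₂` onto `mapSubmodule U P`. -/
noncomputable def mapProj {H₁ H₂ : Type*} [NormedAddCommGroup H₁] [InnerProductSpace ℂ H₁]
    [NormedAddCommGroup H₂] [InnerProductSpace ℂ H₂] [CompleteSpace H₂]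
    (U : Set (H₁ →L[ℂ] H₂)) (P : H₁ →L[ℂ] H₁) : H₂ →L[ℂ] H₂ :=
  haveI : CompleteSpace (mapSubmodule U P) :=
    (Submodule.isClosed_topologicalClosure _).completeSpace_coe
  (mapSubmodule U P).subtypeL ∘L (mapSubmodule U P).orthogonalProjectionOnto

/-- The reflexive hull of a set of operators. -/
def RefHull {H₁ H₂ : Type*} [NormedAddCommGroup H₁] [InnerProductSpace ℂ H₁]
    [NormedAddCommGroup H₂] [InnerProductSpace ℂ H₂]
    (U : Set (H₁ →L[ℂ] H₂)) : Set (H₁ →L[ℂ] H₂) :=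
  {T | ∀ x : H₁, T x ∈ (Submodule.span ℂ ((fun A : H₁ →L[ℂ] H₂ => A x) '' U)).topologicalClosure}

/-- Erdos: `Ref(U) = { T : φ(P)⊥ T P = 0 for every projection P on H₁ }`,
where `φ = Map(U)`. -/
theorem refHull_eq_mapProj_intertwiners {H₁ H₂ : Type*}
    [NormedAddCommGroup H₁] [InnerProductSpace ℂ H₁] [CompleteSpace H₁]
    [NormedAddCommGroup H₂] [InnerProductSpace ℂ H₂] [CompleteSpace H₂]
    (U : Submodule ℂ (H₁ →L[ℂ] H₂)) :
    RefHull (U : Set (H₁ →L[ℂ] H₂)) =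
      {T : H₁ →L[ℂ] H₂ | ∀ P : H₁ →L[ℂ] H₁, IsProjection P →
        (1 - mapProj (U : Set (H₁ →L[ℂ] H₂)) P) ∘L T ∘L P = 0} := by
  ext T
  have hcs : ∀ P : H₁ →L[ℂ] H₁, CompleteSpace (mapSubmodule (U : Set (H₁ →L[ℂ] H₂)) P) :=
    fun P => (Submodule.isClosed_topologicalClosure _).completeSpace_coe
  have hproj : ∀ (P : H₁ →L[ℂ] H₁) (z : H₂),
      z ∈ mapSubmodule (U : Set (H₁ →L[ℂ] H₂)) P →
      mapProj (U : Set (H₁ →L[ℂ] H₂)) P z = z := by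
    intro P z hz
    haveI := hcs P
    exact Submodule.starProjection_eq_self_iff.2 hz
  constructor
  · intro hT P _
    ext x
    have hx : T (P x) ∈ mapSubmodule (U : Set (H₁ →L[ℂ] H₂)) P := by
      have h1 := hT (P x)
      refine Submodule.topologicalClosure_mono (Submodule.span_mono ?_) h1
      rintro z ⟨A, hA, rfl⟩
      exact ⟨A, hA, x, rfl⟩
    simp [ContinuousLinearMap.comp_apply, ContinuousLinearMap.sub_apply,
      hproj P _ hx]
  · intro hT x
    set K : Submodule ℂ H₁ := ℂ ∙ x with hK
    set P : H₁ →L[ℂ] H₁ := K.subtypeL ∘L K.orthogonalProjectionOnto with hPdef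
    have hmem : ∀ z : H₁, P z ∈ K := fun z => (K.orthogonalProjectionOnto z).2
    have hfix : ∀ z : H₁, z ∈ K → P z = z := fun z hz => by
      exact Submodule.starProjection_eq_self_iff.2 hz
    have hP : IsProjection P := by
      refine ⟨isSelfAdjoint_starProjection K, ?_⟩
      ext z
      exact hfix _ (hmem z)
    have hPx : P x = x := hfix x (Submodule.mem_span_singleton_self x)
    have h0 := congrArg (fun S => S x) (hT P hP)
    simp only [ContinuousLinearMap.comp_apply, ContinuousLinearMap.sub_apply,
      ContinuousLinearMap.one_apply, ContinuousLinearMap.zero_apply, hPx,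
      sub_eq_zero] at h0
    have hTx : T x ∈ mapSubmodule (U : Set (H₁ →L[ℂ] H₂)) P := by
      haveI := hcs P
      rw [h0]
      exact (((mapSubmodule (U : Set (H₁ →L[ℂ] H₂)) P).orthogonalProjectionOnto) (T x)).2
    refine Submodule.topologicalClosure_minimal _ ?_
      (Submodule.isClosed_topologicalClosure _) hTx
    rw [Submodule.span_le]
    rintro z ⟨A, hA, y, rfl⟩
    obtain ⟨c, hc⟩ := Submodule.mem_span_singleton.1 (hmem y)
    have : A (P y) = c • A x := by rw [← hc, map_smul]
    rw [this]
    exact Submodule.smul_mem _ _ (Submodule.le_topologicalClosure _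
      (Submodule.subset_span ⟨A, hA, rfl⟩))
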